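/- Let f ∈ Ω and let z ∈ ℂ with 0 < |z| < 2/3. Then f(z) ≠ 0 and Re(z·f'(z)/f(z)) > |z·f'(z)/f(z) − 1|. (That is, the S_p-radius for the class Ω is 2/3.) -/

import Mathlib

open Complex Metric

/-- The open unit disc in `ℂ`. -/
def unitDisc : Set ℂ := Metric.ball 0 1

/-- `f ∈ 𝒜ₙ`: `f` is analytic on the unit disc with power series
`f(z) = z + ∑_{k=n+1}^∞ a_k z^k`. -/
def MemA (n : ℕ) (f : ℂ → ℂ) : Prop :=
  DifferentiableOn ℂ f unitDisc ∧
    ∃ a : ℕ → ℂ, ∀ z ∈ unitDisc, f z = z + ∑' k : ℕ, a k * z ^ (n + 1 + k)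

/-- `f ∈ Ωₙ`: `f ∈ 𝒜ₙ` and `|z f'(z) - f(z)| < 1/2` on the unit disc. -/
def MemOmega (n : ℕ) (f : ℂ → ℂ) : Prop :=
  MemA n f ∧ ∀ z ∈ unitDisc, ‖z * deriv f z - f z‖ < 1 / 2

section Aux

open Set Filter Asymptotics


/-- deriv t 0 = 0 where t has the quadratic-tail series representation. -/
lemma aux_deriv_t (t : ℂ → ℂ) (a : ℕ → ℂ)
    (hdiff : DifferentiableOn ℂ t (ball (0:ℂ) 1))
    (ht0 : t 0 = 0)
    (ha : ∀ z ∈ ball (0:ℂ) 1, t z = ∑' k : ℕ, a k * z ^ (1 + 1 + k)) :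
    deriv t 0 = 0 := by
  have hAn : AnalyticAt ℂ t 0 :=
    (hdiff.analyticOnNhd isOpen_ball) 0 (mem_ball_self one_pos)
  rcases hAn.eventually_eq_zero_or_eventually_ne_zero with h | h
  · have : t =ᶠ[nhds (0:ℂ)] (fun _ => 0) := h
    rw [this.deriv_eq, deriv_const]
  · have hball : ∀ᶠ x in nhdsWithin (0:ℂ) {(0:ℂ)}ᶜ, x ∈ ball (0:ℂ) 1 :=
      eventually_nhdsWithin_of_eventually_nhds
        (isOpen_ball.eventually_mem (mem_ball_self one_pos))
    have hne : ∀ᶠ x in nhdsWithin (0:ℂ) {(0:ℂ)}ᶜ, x ≠ 0 := by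
      simpa [Set.mem_compl_iff] using
        (eventually_mem_nhdsWithin (s := {(0:ℂ)}ᶜ) (a := (0:ℂ)))
    obtain ⟨z₀, ⟨htz₀, hz₀ball⟩, hz₀0⟩ := ((h.and hball).and hne).exists
    have hz₀pos : 0 < ‖z₀‖ := norm_pos_iff.mpr hz₀0
    have hsum : Summable (fun k => a k * z₀ ^ (1+1+k)) := by
      by_contra hs
      exact htz₀ ((ha z₀ hz₀ball).trans (tsum_eq_zero_of_not_summable hs))
    have hsumn : Summable (fun k => ‖a k * z₀ ^ (1+1+k)‖) := summable_norm_iff.mpr hsum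
    set C := ∑' k, ‖a k * z₀ ^ (1+1+k)‖ with hC
    have hCk : ∀ k, ‖a k‖ * ‖z₀‖^(1+1+k) ≤ C := by
      intro k
      rw [← norm_pow, ← norm_mul]
      exact Summable.le_tsum hsumn k (fun j _ => norm_nonneg _)
    have hC0 : 0 ≤ C := by
      have := hCk 0
      nlinarith [norm_nonneg (a 0), pow_pos hz₀pos (1+1+0)]
    set K := 2*C/‖z₀‖^2 + 1 with hK
    have hKpos : 0 < K := by positivity
    have hbound : ∀ ζ : ℂ, ζ ∈ ball (0:ℂ) 1 → ‖ζ‖ ≤ ‖z₀‖/2 → ‖t ζ‖ ≤ K * ‖ζ‖^2 := by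
      intro ζ hζb hζle
      have hterm : ∀ k, ‖a k * ζ ^ (1+1+k)‖ ≤ (C/‖z₀‖^2 * ‖ζ‖^2) * (1/2:ℝ)^k := by
        intro k
        have h1 : ‖a k‖ * ‖z₀‖^2 * ‖z₀‖^k ≤ C := by
          have h := hCk k
          rwa [show (1+1+k) = 2+k from by omega, pow_add, ← mul_assoc] at h
        have h2 : ‖ζ‖^k ≤ ‖z₀‖^k * (1/2:ℝ)^k := by
          calc ‖ζ‖^k ≤ (‖z₀‖/2)^k := pow_le_pow_left₀ (norm_nonneg _) hζle k
          _ = ‖z₀‖^k * (1/2:ℝ)^k := by rw [div_pow, div_eq_mul_inv, one_div, inv_pow]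
        have h3 : ‖a k * ζ ^ (1+1+k)‖ = ‖a k‖ * ‖ζ‖^2 * ‖ζ‖^k := by
          rw [norm_mul, norm_pow, show (1+1+k) = 2+k from by omega, pow_add]; ring
        rw [h3]
        rw [div_mul_eq_mul_div, div_mul_eq_mul_div, le_div_iff₀ (by positivity)]
        calc ‖a k‖ * ‖ζ‖^2 * ‖ζ‖^k * ‖z₀‖^2
            ≤ ‖a k‖ * ‖ζ‖^2 * (‖z₀‖^k * (1/2:ℝ)^k) * ‖z₀‖^2 := by gcongr
          _ = (‖a k‖ * ‖z₀‖^2 * ‖z₀‖^k) * ((1/2:ℝ)^k * ‖ζ‖^2) := by ring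
          _ ≤ C * ((1/2:ℝ)^k * ‖ζ‖^2) := by
              have : (0:ℝ) ≤ (1/2:ℝ)^k * ‖ζ‖^2 := by positivity
              exact mul_le_mul_of_nonneg_right h1 this
          _ = C * ‖ζ‖^2 * (1/2:ℝ)^k := by ring
      have hgeo : Summable (fun k => (C/‖z₀‖^2 * ‖ζ‖^2) * (1/2:ℝ)^k) :=
        (summable_geometric_of_lt_one (by norm_num) (by norm_num)).mul_left _
      have hsumζn : Summable (fun k => ‖a k * ζ ^ (1+1+k)‖) :=
        Summable.of_nonneg_of_le (fun k => norm_nonneg _) hterm hgeo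
      have hsumζ : Summable (fun k => a k * ζ ^ (1+1+k)) := summable_norm_iff.mp hsumζn
      calc ‖t ζ‖ = ‖∑' k, a k * ζ ^ (1+1+k)‖ := by rw [ha ζ hζb]
        _ ≤ ∑' k, ‖a k * ζ ^ (1+1+k)‖ := norm_tsum_le_tsum_norm hsumζn
        _ ≤ ∑' k, (C/‖z₀‖^2 * ‖ζ‖^2) * (1/2:ℝ)^k := Summable.tsum_le_tsum hterm hsumζn hgeo
        _ = (C/‖z₀‖^2 * ‖ζ‖^2) * ∑' k, (1/2:ℝ)^k := tsum_mul_left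
        _ = (C/‖z₀‖^2 * ‖ζ‖^2) * 2 := by rw [tsum_geometric_of_lt_one (by norm_num) (by norm_num)]; norm_num
        _ ≤ K * ‖ζ‖^2 := by
            rw [hK]
            have : 0 ≤ ‖ζ‖^2 := sq_nonneg _
            have h4 : C/‖z₀‖^2 * 2 ≤ 2*C/‖z₀‖^2 + 1 := by
              rw [div_mul_eq_mul_div, mul_comm C 2]
              nlinarith [div_nonneg (mul_nonneg (by norm_num : (0:ℝ) ≤ 2) hC0) (sq_nonneg ‖z₀‖)]
            nlinarith
    have hlo : t =o[nhds (0:ℂ)] (fun ζ => ζ) := by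
      rw [isLittleO_iff]
      intro c hc
      have hδ : 0 < min (1/2) (min (‖z₀‖/2) (c/K)) := by positivity
      filter_upwards [Metric.closedBall_mem_nhds (0:ℂ) hδ] with ζ hζ
      rw [mem_closedBall, dist_zero_right] at hζ
      have hζ1 : ζ ∈ ball (0:ℂ) 1 := by
        rw [mem_ball, dist_zero_right]
        have := le_trans hζ (min_le_left _ _); linarith
      have hζ2 : ‖ζ‖ ≤ ‖z₀‖/2 := le_trans hζ (le_trans (min_le_right _ _) (min_le_left _ _))
      have hζ3 : ‖ζ‖ ≤ c/K := le_trans hζ (le_trans (min_le_right _ _) (min_le_right _ _))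
      calc ‖t ζ‖ ≤ K * ‖ζ‖^2 := hbound ζ hζ1 hζ2
        _ = (K * ‖ζ‖) * ‖ζ‖ := by ring
        _ ≤ c * ‖ζ‖ := by
            have : K * ‖ζ‖ ≤ c := by
              rw [← le_div_iff₀' hKpos]; exact hζ3
            exact mul_le_mul_of_nonneg_right this (norm_nonneg _)
    have hd : HasDerivAt t 0 0 := by
      rw [hasDerivAt_iff_isLittleO]
      simpa [ht0] using hlo
    exact hd.deriv


/-- Second-order Schwarz: if w is differentiable on the unit ball, w 0 = 0, deriv w 0 = 0,
and ‖w‖ < 1/2 on the ball, then ‖w x‖ ≤ ‖x‖²/2 and more precisely the quotient is bounded. -/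
lemma aux_schwarz2 (w : ℂ → ℂ)
    (hwdiff : DifferentiableOn ℂ w (ball (0:ℂ) 1))
    (hw0 : w 0 = 0) (hw1 : deriv w 0 = 0)
    (hwb : ∀ x ∈ ball (0:ℂ) 1, ‖w x‖ < 1/2) :
    ∀ x ∈ ball (0:ℂ) 1, ‖w x‖ ≤ ‖x‖^2 / 2 := by
  set g := dslope w 0 with hgdef
  have hgdiff : DifferentiableOn ℂ g (ball (0:ℂ) 1) :=
    (Complex.differentiableOn_dslope (ball_mem_nhds 0 one_pos)).mpr hwdiff
  have hwmaps : MapsTo w (ball (0:ℂ) 1) (ball (w 0) (1/2)) := by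
    intro x hx
    rw [hw0, mem_ball_zero_iff]
    exact hwb x hx
  have hg : ∀ x ∈ ball (0:ℂ) 1, ‖g x‖ ≤ 1/2 := by
    intro x hx
    have := Complex.norm_dslope_le_div_of_mapsTo_ball hwdiff (hwmaps.mono_right ball_subset_closedBall) hx
    simpa using this
  have hg0 : g 0 = 0 := by
    rw [hgdef, dslope_same]; exact hw1
  have hgg : ∀ x ∈ ball (0:ℂ) 1, ‖dslope g 0 x‖ ≤ 1/2 := by
    intro x hx
    refine le_of_forall_pos_le_add (fun ε hε => ?_)
    have hmaps : MapsTo g (ball (0:ℂ) 1) (ball (g 0) (1/2 + ε)) := by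
      intro y hy
      rw [hg0, mem_ball_zero_iff]
      exact lt_of_le_of_lt (hg y hy) (by linarith)
    have := Complex.norm_dslope_le_div_of_mapsTo_ball hgdiff (hmaps.mono_right ball_subset_closedBall) hx
    simpa using this
  intro x hx
  rcases eq_or_ne x 0 with rfl | hx0
  · simp [hw0]
  · have h1 : g x = x⁻¹ * w x := by
      rw [hgdef, dslope_of_ne w hx0, slope_def_field, hw0, sub_zero, sub_zero, div_eq_inv_mul]
    have h2 : dslope g 0 x = x⁻¹ * (x⁻¹ * w x) := by
      rw [dslope_of_ne g hx0, slope_def_field, hg0, sub_zero, sub_zero, div_eq_inv_mul, h1]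
    have h3 : w x = x^2 * dslope g 0 x := by
      rw [h2]; field_simp
    calc ‖w x‖ = ‖x‖^2 * ‖dslope g 0 x‖ := by rw [h3, norm_mul, norm_pow]
      _ ≤ ‖x‖^2 * (1/2) := mul_le_mul_of_nonneg_left (hgg x hx) (by positivity)
      _ = ‖x‖^2 / 2 := by ring

end Aux

open Set Filter Asymptotics in
theorem stmt_16 (f : ℂ → ℂ) (hf : MemOmega 1 f) (z : ℂ) (hz0 : 0 < ‖z‖) (hz : ‖z‖ < 2 / 3) :
    f z ≠ 0 ∧ (z * deriv f z / f z).re > ‖z * deriv f z / f z - 1‖ := by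
  obtain ⟨⟨hdiff, a, ha⟩, hbound⟩ := hf
  rw [show unitDisc = ball (0:ℂ) 1 from rfl] at hdiff ha hbound
  have h0mem : (0:ℂ) ∈ ball (0:ℂ) 1 := mem_ball_self one_pos
  have hzmem : z ∈ ball (0:ℂ) 1 := by
    rw [mem_ball_zero_iff]; linarith
  have hzne : z ≠ 0 := by simpa [norm_pos_iff] using hz0
  -- f 0 = 0
  have hf0 : f 0 = 0 := by simpa using ha 0 h0mem
  -- analyticity
  have hA : AnalyticOnNhd ℂ f (ball (0:ℂ) 1) := hdiff.analyticOnNhd isOpen_ball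
  have hA' : AnalyticOnNhd ℂ (deriv f) (ball (0:ℂ) 1) := hA.deriv
  have hfd0 : DifferentiableAt ℂ f 0 := (hA 0 h0mem).differentiableAt
  -- deriv f 0 = 1
  have hderiv1 : deriv f 0 = 1 := by
    have ht : deriv (fun y => f y - y) 0 = 0 := by
      refine aux_deriv_t _ a (hdiff.sub differentiableOn_id) (by simp [hf0]) ?_
      intro y hy
      rw [ha y hy]; ring
    have : deriv (fun y => f y - y) 0 = deriv f 0 - 1 := by
      rw [deriv_fun_sub (g := fun y : ℂ => y) hfd0 differentiableAt_id, deriv_id'']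
    rw [this] at ht; exact sub_eq_zero.mp ht
  -- the function w
  set w : ℂ → ℂ := fun y => y * deriv f y - f y with hwdef
  have hwdiff : DifferentiableOn ℂ w (ball (0:ℂ) 1) :=
    (differentiableOn_id.mul hA'.differentiableOn).sub hdiff
  have hw0 : w 0 = 0 := by simp [hwdef, hf0]
  have hw1 : deriv w 0 = 0 := by
    have hdd : HasDerivAt (deriv f) (deriv (deriv f) 0) 0 :=
      ((hA' 0 h0mem).differentiableAt).hasDerivAt
    have h1 : HasDerivAt (fun y : ℂ => y * deriv f y)
        (1 * deriv f 0 + 0 * deriv (deriv f) 0) 0 := (hasDerivAt_id 0).mul hdd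
    have h2 : HasDerivAt w (1 * deriv f 0 + 0 * deriv (deriv f) 0 - deriv f 0) 0 :=
      h1.sub hfd0.hasDerivAt
    rw [h2.deriv]; ring
  have hw2 : ∀ x ∈ ball (0:ℂ) 1, ‖w x‖ ≤ ‖x‖^2 / 2 :=
    aux_schwarz2 w hwdiff hw0 hw1 (fun x hx => by simpa using hbound x hx)
  -- the function h = dslope f 0
  set h : ℂ → ℂ := dslope f 0 with hhdef
  have hhdiff : DifferentiableOn ℂ h (ball (0:ℂ) 1) :=
    (Complex.differentiableOn_dslope (ball_mem_nhds 0 one_pos)).mpr hdiff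
  have hh0 : h 0 = 1 := by rw [hhdef, dslope_same, hderiv1]
  have hhval : ∀ x : ℂ, x ≠ 0 → h x = x⁻¹ * f x := by
    intro x hx0
    rw [hhdef, dslope_of_ne f hx0, slope_def_field, hf0, sub_zero, sub_zero, div_eq_inv_mul]
  -- bound on deriv h
  have hdh : ∀ x ∈ ball (0:ℂ) 1, ‖deriv h x‖ ≤ 1/2 := by
    have hne0 : ∀ x ∈ ball (0:ℂ) 1, x ≠ 0 → ‖deriv h x‖ ≤ 1/2 := by
      intro x hx hx0
      have hev : h =ᶠ[nhds x] fun y => y⁻¹ * f y := by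
        filter_upwards [isOpen_compl_singleton.eventually_mem
          (by simpa [Set.mem_compl_iff] using hx0 : x ∈ ({(0:ℂ)}ᶜ : Set ℂ))] with y hy
        exact hhval y (by simpa [Set.mem_compl_iff] using hy)
      have hdd : HasDerivAt (fun y : ℂ => y⁻¹ * f y)
          (-(x^2)⁻¹ * f x + x⁻¹ * deriv f x) x :=
        (hasDerivAt_inv hx0).mul ((hA x hx).differentiableAt).hasDerivAt
      have : deriv h x = -(x^2)⁻¹ * f x + x⁻¹ * deriv f x := by
        rw [hev.deriv_eq, hdd.deriv]
      have heq : deriv h x = w x / x^2 := by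
        rw [this, hwdef]; field_simp; ring
      rw [heq, norm_div, norm_pow]
      rw [div_le_iff₀ (pow_pos (norm_pos_iff.mpr hx0) 2)]
      have := hw2 x hx
      linarith
    intro x hx
    rcases eq_or_ne x 0 with rfl | hx0
    · -- by continuity
      have hconts : ContinuousAt (fun y => ‖deriv h y‖) 0 :=
        (((hhdiff.analyticOnNhd isOpen_ball).deriv 0 h0mem).differentiableAt.continuousAt).norm
      have htt : Tendsto (fun y => ‖deriv h y‖) (nhdsWithin (0:ℂ) {(0:ℂ)}ᶜ)
          (nhds ‖deriv h 0‖) :=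
        (hconts.continuousWithinAt (s := {(0:ℂ)}ᶜ)).tendsto
      refine le_of_tendsto htt ?_
      · show ∀ᶠ y in nhdsWithin (0:ℂ) {(0:ℂ)}ᶜ, ‖deriv h y‖ ≤ 1/2
        have hball : ∀ᶠ y in nhdsWithin (0:ℂ) {(0:ℂ)}ᶜ, y ∈ ball (0:ℂ) 1 :=
          eventually_nhdsWithin_of_eventually_nhds
            (isOpen_ball.eventually_mem h0mem)
        have hne : ∀ᶠ y in nhdsWithin (0:ℂ) {(0:ℂ)}ᶜ, y ≠ 0 := by
          simpa [Set.mem_compl_iff] using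
            (eventually_mem_nhdsWithin (s := {(0:ℂ)}ᶜ) (a := (0:ℂ)))
        filter_upwards [hball, hne] with y hy1 hy2
        exact hne0 y hy1 hy2
    · exact hne0 x hx hx0
  -- mean value inequality
  have hmvt : ‖h z - h 0‖ ≤ 1/2 * ‖z - 0‖ :=
    (convex_ball (0:ℂ) 1).norm_image_sub_le_of_norm_hasDerivWithin_le
      (fun x hx => ((hhdiff.differentiableAt (isOpen_ball.mem_nhds hx)).hasDerivAt).hasDerivWithinAt)
      hdh h0mem hzmem
  rw [hh0, sub_zero, hhval z hzne] at hmvt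
  -- lower bound on ‖f z‖
  have hfz : ‖f z‖ ≥ ‖z‖ * (1 - ‖z‖/2) := by
    have h1 : ‖z⁻¹ * f z‖ ≥ 1 - ‖z‖/2 := by
      have := norm_sub_norm_le (1:ℂ) (z⁻¹ * f z)
      rw [norm_one, norm_sub_rev] at this
      linarith [hmvt, this]
    have h2 : ‖z⁻¹ * f z‖ = ‖f z‖ / ‖z‖ := by
      rw [norm_mul, norm_inv]; ring
    rw [h2, ge_iff_le, le_div_iff₀ hz0] at h1
    linarith [h1]
  have hfzpos : 0 < ‖f z‖ := by
    have : 0 < ‖z‖ * (1 - ‖z‖/2) := by nlinarith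
    linarith
  have hfzne : f z ≠ 0 := by simpa [norm_pos_iff] using hfzpos
  refine ⟨hfzne, ?_⟩
  -- the quantity u - 1 = w z / f z
  have hu1 : z * deriv f z / f z - 1 = w z / f z := by
    rw [hwdef]; field_simp
  have hnorm : ‖z * deriv f z / f z - 1‖ < 1/2 := by
    rw [hu1, norm_div]
    rw [div_lt_iff₀ hfzpos]
    have hwz := hw2 z hzmem
    -- ‖z‖²/2 < (1/2) * (‖z‖(1-‖z‖/2)) since ‖z‖ < 2/3
    have : ‖z‖^2/2 < 1/2 * (‖z‖ * (1 - ‖z‖/2)) := by nlinarith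
    have h3 : 1/2 * (‖z‖ * (1 - ‖z‖/2)) ≤ 1/2 * ‖f z‖ := by linarith [hfz]
    linarith
  have hre : (z * deriv f z / f z).re = 1 + (z * deriv f z / f z - 1).re := by
    simp [sub_re]
  rw [hre]
  have habs : |(z * deriv f z / f z - 1).re| ≤ ‖z * deriv f z / f z - 1‖ :=
    Complex.abs_re_le_norm _
  have := abs_le.mp habs
  linarith [this.1, this.2, hnorm]
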